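/- Fix p ≥ 2 and let D be a distribution on ℝᵈ such that for some ε > 0 and δ ∈ (0,1], every v with ‖v‖_p ≤ ε satisfies tv(D, D+v) ≤ δ. Let η ~ D and let σ be a permutation of {1,…,d} ordering coordinates by decreasing variance: E[η_{σ(1)}²] ≥ … ≥ E[η_{σ(d)}²]. Then for every i ∈ {1,…,d}, E[η_{σ(i)}²] ≥ (ε²(d−i+1)^{1−2/p}/800)·(1−δ)/δ². -/

import Mathlib

open MeasureTheory

/-- Total variation distance between two measures. -/
noncomputable def tv {α : Type*} [MeasurableSpace α] (P Q : Measure α) : ℝ :=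
  ⨆ A : {s : Set α // MeasurableSet s}, |(P A.1).toReal - (Q A.1).toReal|

/-- The ℓ_p norm of a vector in ℝᵈ, for `p : ℝ≥0∞` (with `p = ∞` giving the sup norm). -/
noncomputable def lpNorm {d : ℕ} (p : ENNReal) (v : EuclideanSpace ℝ (Fin d)) : ℝ :=
  if p = ⊤ then ⨆ i, |v i| else (∑ i, |v i| ^ p.toReal) ^ (1 / p.toReal)

section aux

/-- sign of a Bool, as a real number -/
private def sg (b : Bool) : ℝ := if b then 1 else -1

private lemma sg_sq (b : Bool) : sg b * sg b = 1 := by cases b <;> simp [sg]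
private lemma sg_abs (b : Bool) : |sg b| = 1 := by cases b <;> simp [sg]
private lemma sg_not (b : Bool) : sg (!b) = - sg b := by cases b <;> simp [sg]

private lemma sum_sg_mul {d : ℕ} (c c' : Fin d) :
    ∑ ς : Fin d → Bool, sg (ς c) * sg (ς c') = if c = c' then (2:ℝ)^d else 0 := by
  rcases eq_or_ne c c' with rfl | hne
  · simp only [if_pos rfl, sg_sq]
    simp [Finset.card_univ]
  · rw [if_neg hne]
    apply Finset.sum_ninvolution (fun ς => Function.update ς c (!(ς c)))
    · intro ς
      simp only [Function.update_self, Function.update_of_ne (Ne.symm hne), sg_not]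
      ring
    · intro ς _ h
      have := congrFun h c
      simp at this
    · intro ς; exact Finset.mem_univ _
    · intro ς
      funext x
      rcases eq_or_ne x c with rfl | hx
      · simp
      · simp [Function.update_of_ne hx]

private lemma sum_sq_signs {d : ℕ} (u : Finset (Fin d)) (a : Fin d → ℝ) :
    ∑ ς : Fin d → Bool, (∑ c ∈ u, sg (ς c) * a c)^2 = 2^d * ∑ c ∈ u, (a c)^2 := by
  have expand : ∀ ς : Fin d → Bool,
      (∑ c ∈ u, sg (ς c) * a c)^2
        = ∑ c ∈ u, ∑ c' ∈ u, (a c * a c') * (sg (ς c) * sg (ς c')) := by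
    intro ς
    rw [sq, Finset.sum_mul_sum]
    exact Finset.sum_congr rfl fun c _ => Finset.sum_congr rfl fun c' _ => by ring
  simp only [expand]
  rw [Finset.sum_comm]
  have inner : ∀ c ∈ u, (∑ ς : Fin d → Bool, ∑ c' ∈ u, (a c * a c') * (sg (ς c) * sg (ς c')))
      = 2^d * (a c)^2 := by
    intro c hc
    rw [Finset.sum_comm]
    have : ∀ c' ∈ u, (∑ ς : Fin d → Bool, (a c * a c') * (sg (ς c) * sg (ς c')))
        = if c = c' then 2^d * (a c * a c') else 0 := by
      intro c' _
      rw [← Finset.mul_sum, sum_sg_mul]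
      split_ifs <;> ring
    rw [Finset.sum_congr rfl this, Finset.sum_ite_eq u c (fun c' => 2^d * (a c * a c')), if_pos hc]
    ring
  rw [Finset.sum_congr rfl inner, ← Finset.mul_sum]

private lemma abs_le_tv {α : Type*} [MeasurableSpace α] (P Q : Measure α)
    [IsProbabilityMeasure P] [IsProbabilityMeasure Q] {A : Set α} (hA : MeasurableSet A) :
    |(P A).toReal - (Q A).toReal| ≤ tv P Q := by
  have hbdd : BddAbove (Set.range fun A : {s : Set α // MeasurableSet s} =>
      |(P A.1).toReal - (Q A.1).toReal|) := by
    refine ⟨2, ?_⟩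
    rintro x ⟨B, rfl⟩
    have h1 : (P B.1).toReal ≤ 1 := by
      have := prob_le_one (μ := P) (s := B.1)
      simpa using ENNReal.toReal_mono (by simp) this
    have h2 : (Q B.1).toReal ≤ 1 := by
      have := prob_le_one (μ := Q) (s := B.1)
      simpa using ENNReal.toReal_mono (by simp) this
    have h3 : (0:ℝ) ≤ (P B.1).toReal := ENNReal.toReal_nonneg
    have h4 : (0:ℝ) ≤ (Q B.1).toReal := ENNReal.toReal_nonneg
    rw [abs_sub_le_iff]; constructor <;> linarith
  exact le_ciSup hbdd (⟨A, hA⟩ : {s : Set α // MeasurableSet s})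

private lemma shift_once {d : ℕ} (D : Measure (EuclideanSpace ℝ (Fin d))) [IsProbabilityMeasure D]
    (v : EuclideanSpace ℝ (Fin d)) (δ : ℝ) (h : tv D (D.map (· + v)) ≤ δ)
    {B : Set (EuclideanSpace ℝ (Fin d))} (hB : MeasurableSet B) :
    (D B).toReal ≤ (D ((· + v) ⁻¹' B)).toReal + δ := by
  have hmeas : Measurable (fun x : EuclideanSpace ℝ (Fin d) => x + v) :=
    measurable_id.add_const v
  haveI : IsProbabilityMeasure (D.map (· + v)) :=
    Measure.isProbabilityMeasure_map hmeas.aemeasurable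
  have hmap : (D.map (· + v)) B = D ((· + v) ⁻¹' B) := Measure.map_apply hmeas hB
  have h1 : (D B).toReal - ((D.map (· + v)) B).toReal ≤ δ :=
    le_trans (le_trans (le_abs_self _) (abs_le_tv D (D.map (· + v)) hB)) h
  rw [hmap] at h1
  linarith

private lemma shift_iter {d : ℕ} (D : Measure (EuclideanSpace ℝ (Fin d)))
    [IsProbabilityMeasure D]
    (v : EuclideanSpace ℝ (Fin d)) (δ : ℝ) (h : tv D (D.map (· + v)) ≤ δ) :
    ∀ (m : ℕ) (B : Set (EuclideanSpace ℝ (Fin d))), MeasurableSet B →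
      (D B).toReal ≤ (D ((· + m • v) ⁻¹' B)).toReal + m * δ := by
  intro m
  induction m with
  | zero => intro B _; simp
  | succ m ih =>
    intro B hB
    have hmeas : Measurable (fun x : EuclideanSpace ℝ (Fin d) => x + v) :=
      measurable_id.add_const v
    have step := shift_once D v δ h hB
    have ih' := ih ((· + v) ⁻¹' B) (hmeas hB)
    have hset : ((· + m • v) ⁻¹' ((· + v) ⁻¹' B)) = ((· + (m+1) • v) ⁻¹' B) := by
      ext x
      simp only [Set.mem_preimage, succ_nsmul, ← add_assoc]
    rw [hset] at ih'
    push_cast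
    linarith

private lemma core_ineq (δ : ℝ) (hδ0 : 0 < δ) (hδ1 : δ ≤ 1) :
    (1 - δ) / (800 * δ^2) ≤
      ((max 1 ⌊1/(2*δ)⌋₊ : ℕ):ℝ)^2 * (1 - ((max 1 ⌊1/(2*δ)⌋₊ : ℕ):ℝ) * δ) / 8 := by
  set n : ℕ := ⌊1/(2*δ)⌋₊ with hn
  rcases le_or_gt δ (1/2) with hhalf | hhalf
  · have h1n : 1 ≤ n := Nat.le_floor (by rw [le_div_iff₀ (by linarith)]; push_cast; linarith)
    have hmax : max 1 n = n := max_eq_right h1n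
    rw [hmax]
    have hub : (n:ℝ) ≤ 1/(2*δ) := Nat.floor_le (by positivity)
    have hlb : 1/(2*δ) < (n:ℝ) + 1 := Nat.lt_floor_add_one _
    have hn1 : (1:ℝ) ≤ (n:ℝ) := by exact_mod_cast h1n
    set M : ℝ := (n:ℝ)
    have hub' : M * (2*δ) ≤ 1 := by rwa [le_div_iff₀ (by linarith)] at hub
    have hlb' : 1 < (M+1) * (2*δ) := by rwa [div_lt_iff₀ (by linarith)] at hlb
    have hz1 : M * δ ≤ 1/2 := by nlinarith
    have hz2 : 1/2 - δ < M * δ := by nlinarith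
    have hz3 : δ ≤ M * δ := by nlinarith
    have hz4 : 1/4 < M * δ := by linarith
    have hza : (1:ℝ)/16 < (M*δ)^2 := by nlinarith
    have hzb : (1:ℝ)/2 ≤ 1 - M*δ := by linarith
    have h25 : (1:ℝ)/32 ≤ (M*δ)^2 * (1 - M*δ) := by nlinarith
    rw [div_le_div_iff₀ (by positivity) (by norm_num)]
    nlinarith [h25]
  · have hn0 : n = 0 := by
      rw [hn, Nat.floor_eq_zero]
      rw [div_lt_one (by linarith)]
      linarith
    rw [hn0]
    norm_num
    rw [div_le_div_iff₀ (by positivity) (by norm_num)]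
    have h8 : (8:ℝ) ≤ 800 * δ^2 := by nlinarith
    nlinarith [mul_nonneg (by linarith : (0:ℝ) ≤ 1 - δ) (by linarith : (0:ℝ) ≤ 800*δ^2 - 8)]

end aux

theorem stmt11 {d : ℕ} (p : ENNReal) (hp : 2 ≤ p)
    (D : Measure (EuclideanSpace ℝ (Fin d))) [IsProbabilityMeasure D]
    (ε δ : ℝ) (hε : 0 < ε) (hδ0 : 0 < δ) (hδ1 : δ ≤ 1)
    (hTV : ∀ v : EuclideanSpace ℝ (Fin d), lpNorm p v ≤ ε → tv D (D.map (· + v)) ≤ δ)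
    (σ : Equiv.Perm (Fin d))
    (hmono : ∀ i j : Fin d, i ≤ j →
      (∫⁻ η, ENNReal.ofReal ((η (σ j)) ^ 2) ∂D) ≤ ∫⁻ η, ENNReal.ofReal ((η (σ i)) ^ 2) ∂D) :
    ∀ i : Fin d,
      ENNReal.ofReal (ε ^ 2 * ((d : ℝ) - (i : ℕ)) ^ (1 - 2 / p.toReal) / 800 *
          ((1 - δ) / δ ^ 2)) ≤
        ∫⁻ η, ENNReal.ofReal ((η (σ i)) ^ 2) ∂D := by
  intro i
  classical
  by_cases htop : (∫⁻ η, ENNReal.ofReal ((η (σ i)) ^ 2) ∂D) = ⊤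
  · rw [htop]; exact le_top
  -- basic quantities
  set pt : ℝ := p.toReal with hptdef
  have hid : (i:ℕ) < d := i.isLt
  set k : ℕ := d - (i:ℕ) with hkdef
  have hk1 : 1 ≤ k := by omega
  set K : ℝ := (k:ℝ) with hKdef
  have hKpos : (0:ℝ) < K := by
    rw [hKdef]; exact_mod_cast hk1
  have hcast : (d : ℝ) - ((i:ℕ):ℝ) = K := by
    rw [hKdef, hkdef]
    push_cast [Nat.cast_sub (le_of_lt hid)]
    ring
  rw [hcast]
  -- the exponent arithmetic : cst^2 * K = ε^2 * K^(1 - 2/pt)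
  set cst : ℝ := ε * K ^ (-(1/pt)) with hcstdef
  have hcstpos : 0 < cst := by
    rw [hcstdef]
    exact mul_pos hε (Real.rpow_pos_of_pos hKpos _)
  have hcstK : cst^2 * K = ε^2 * K ^ (1 - 2/pt) := by
    rw [hcstdef]
    rw [mul_pow]
    have h1 : (K ^ (-(1/pt)))^2 = K ^ (-(1/pt)) * K ^ (-(1/pt)) := sq _
    rw [h1, ← Real.rpow_add hKpos]
    nth_rewrite 2 [show K = K ^ (1:ℝ) from (Real.rpow_one K).symm]
    rw [mul_assoc, ← Real.rpow_add hKpos]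
    congr 1
    ring
  -- number of steps
  set m : ℕ := max 1 ⌊1/(2*δ)⌋₊ with hmdef
  set M : ℝ := (m:ℝ) with hMdef
  -- the index set of coordinates
  set T : Finset (Fin d) := (Finset.Ici i).map σ.toEmbedding with hTdef
  have hTcard : T.card = k := by
    rw [hTdef, Finset.card_map, Fin.card_Ici]
  -- the shift vectors
  set v : (Fin d → Bool) → EuclideanSpace ℝ (Fin d) :=
    fun ς => WithLp.toLp 2 (fun c' => if c' ∈ T then sg (ς c') * cst else 0) with hvdef
  -- the linear functionals
  set t : (Fin d → Bool) → EuclideanSpace ℝ (Fin d) → ℝ :=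
    fun ς x => ∑ c ∈ T, sg (ς c) * x c with htdef
  have htmeas : ∀ ς, Measurable (t ς) := by
    intro ς
    apply Finset.measurable_sum
    intro c _
    exact ((measurable_pi_apply c).comp (WithLp.measurable_ofLp 2 _)).const_mul _
  -- norm bound
  have hnorm : ∀ ς, lpNorm p (v ς) ≤ ε := by
    intro ς
    have habs : ∀ c', |v ς c'| = if c' ∈ T then cst else 0 := by
      intro c'
      simp only [hvdef, PiLp.toLp_apply]
      split_ifs with h
      · rw [abs_mul, sg_abs, one_mul, abs_of_pos hcstpos]
      · exact abs_zero
    by_cases hptop : p = ⊤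
    · rw [_root_.lpNorm, if_pos hptop]
      have hpt0 : pt = 0 := by rw [hptdef, hptop]; exact ENNReal.toReal_top
      have hcstε : cst = ε := by
        rw [hcstdef, hpt0]
        norm_num
      haveI : Nonempty (Fin d) := ⟨i⟩
      apply ciSup_le
      intro c'
      rw [habs c']
      split_ifs
      · rw [hcstε]
      · linarith
    · rw [_root_.lpNorm, if_neg hptop, ← hptdef]
      have hpt2 : (2:ℝ) ≤ pt := by
        rw [hptdef]
        have h2 := ENNReal.toReal_mono hptop hp
        simpa using h2
      have hpt0 : (0:ℝ) < pt := by linarith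
      have hsum : ∑ c', |v ς c'| ^ pt = K * cst ^ pt := by
        have hterm : ∀ c', |v ς c'| ^ pt = if c' ∈ T then cst ^ pt else 0 := by
          intro c'
          rw [habs c']
          split_ifs
          · rfl
          · exact Real.zero_rpow (ne_of_gt hpt0)
        rw [Finset.sum_congr rfl (fun c' _ => hterm c'), Finset.sum_ite_mem, Finset.univ_inter,
          Finset.sum_const, hTcard, nsmul_eq_mul, hKdef]
      rw [hsum]
      have h1 : cst ^ pt = ε ^ pt * K⁻¹ := by
        rw [hcstdef, Real.mul_rpow hε.le (Real.rpow_nonneg hKpos.le _),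
          ← Real.rpow_mul hKpos.le]
        congr 1
        rw [show -(1/pt) * pt = -1 by field_simp]
        exact Real.rpow_neg_one K
      rw [h1, show K * (ε ^ pt * K⁻¹) = ε ^ pt * (K * K⁻¹) by ring,
        mul_inv_cancel₀ (ne_of_gt hKpos), mul_one, ← Real.rpow_mul hε.le,
        mul_one_div_cancel (ne_of_gt hpt0), Real.rpow_one]
  -- Chebyshev + amplification bound, per sign vector
  set X : ENNReal := ENNReal.ofReal ((M * cst * K / 2)^2 * ((1 - M*δ)/2)) with hXdef
  have hcheb : ∀ ς, X ≤ ∫⁻ x, ENNReal.ofReal ((t ς x)^2) ∂D := by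
    intro ς
    set R : ℝ := M * cst * K / 2 with hRdef
    have hM0 : (0:ℝ) ≤ M := by rw [hMdef]; positivity
    have hR0 : 0 ≤ R := by rw [hRdef]; positivity
    set G : Set (EuclideanSpace ℝ (Fin d)) := {x | R^2 ≤ (t ς x)^2} with hGdef
    have hGmeas : MeasurableSet G :=
      measurableSet_le measurable_const ((htmeas ς).pow_const 2)
    set B : Set (EuclideanSpace ℝ (Fin d)) := {x | t ς x < R} with hBdef
    have hBmeas : MeasurableSet B := measurableSet_lt (htmeas ς) measurable_const
    -- shift computation
    have hshift : ∀ x : EuclideanSpace ℝ (Fin d), t ς (x + m • v ς) = t ς x + 2 * R := by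
      intro x
      have happ : ∀ c, (x + m • v ς) c = x c + M * (v ς c) := by
        intro c
        have h2 : (m • v ς) c = m • (v ς c) := rfl
        have h3 : (x + m • v ς) c = x c + (m • v ς) c := rfl
        rw [h3, h2, nsmul_eq_mul, hMdef]
      simp only [htdef]
      have hterm : ∀ c ∈ T, sg (ς c) * ((x + m • v ς) c) = sg (ς c) * x c + M * cst := by
        intro c hc
        rw [happ c]
        simp only [hvdef, PiLp.toLp_apply, if_pos hc]
        linear_combination (M * cst) * sg_sq (ς c)
      rw [Finset.sum_congr rfl hterm, Finset.sum_add_distrib, Finset.sum_const, hTcard,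
        nsmul_eq_mul, hRdef, hKdef]
      ring
    have hiter := shift_iter D (v ς) δ (hTV (v ς) (hnorm ς)) m B hBmeas
    have hpre : ((· + m • v ς) ⁻¹' B) ⊆ G := by
      intro x hx
      simp only [Set.mem_preimage, hBdef, Set.mem_setOf_eq] at hx
      rw [hshift x] at hx
      have hlt : t ς x < -R := by linarith
      simp only [hGdef, Set.mem_setOf_eq]
      nlinarith
    have hcomp : Bᶜ ⊆ G := by
      intro x hx
      simp only [hBdef, Set.mem_compl_iff, Set.mem_setOf_eq, not_lt] at hx
      simp only [hGdef, Set.mem_setOf_eq]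
      nlinarith
    have hfin : ∀ s : Set (EuclideanSpace ℝ (Fin d)), D s ≠ ⊤ := fun s => measure_ne_top D s
    have h1 : (D B).toReal ≤ (D G).toReal + M * δ := by
      have h1a := ENNReal.toReal_mono (hfin G) (measure_mono hpre)
      rw [hMdef]
      linarith
    have h2 : (D Bᶜ).toReal ≤ (D G).toReal := ENNReal.toReal_mono (hfin G) (measure_mono hcomp)
    have h3 : (D B).toReal + (D Bᶜ).toReal = 1 := by
      rw [← ENNReal.toReal_add (hfin _) (hfin _), prob_add_prob_compl hBmeas,
        ENNReal.toReal_one]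
    have hq : (1 - M*δ)/2 ≤ (D G).toReal := by linarith
    have hmarkov : ENNReal.ofReal (R^2) *
        D {x | ENNReal.ofReal (R^2) ≤ ENNReal.ofReal ((t ς x)^2)}
          ≤ ∫⁻ x, ENNReal.ofReal ((t ς x)^2) ∂D :=
      mul_meas_ge_le_lintegral₀ ((htmeas ς).pow_const 2).ennreal_ofReal.aemeasurable _
    have hGsub : G ⊆ {x | ENNReal.ofReal (R^2) ≤ ENNReal.ofReal ((t ς x)^2)} :=
      fun x hx => ENNReal.ofReal_le_ofReal hx
    have hM2 : ENNReal.ofReal (R^2) * D G ≤ ∫⁻ x, ENNReal.ofReal ((t ς x)^2) ∂D :=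
      le_trans (mul_le_mul_right (measure_mono hGsub) _) hmarkov
    have hDG : ENNReal.ofReal ((1 - M*δ)/2) ≤ D G := by
      rw [← ENNReal.ofReal_toReal (hfin G)]
      exact ENNReal.ofReal_le_ofReal hq
    calc X = ENNReal.ofReal (R^2) * ENNReal.ofReal ((1 - M*δ)/2) := by
          rw [hXdef, ENNReal.ofReal_mul (sq_nonneg R)]
      _ ≤ ENNReal.ofReal (R^2) * D G := mul_le_mul_right hDG _
      _ ≤ ∫⁻ x, ENNReal.ofReal ((t ς x)^2) ∂D := hM2
  -- summing over sign vectors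
  have hsum : X ≤ ∑ j ∈ Finset.Ici i, ∫⁻ η, ENNReal.ofReal ((η (σ j)) ^ 2) ∂D := by
    have hmeasc : ∀ c : Fin d, Measurable
        (fun x : EuclideanSpace ℝ (Fin d) => ENNReal.ofReal ((x c)^2)) :=
      fun c => (((measurable_pi_apply c).comp (WithLp.measurable_ofLp 2 _)).pow_const 2).ennreal_ofReal
    have hτsum : ∑ ς : Fin d → Bool, (∫⁻ x, ENNReal.ofReal ((t ς x)^2) ∂D)
        = (2:ENNReal)^d * ∑ c ∈ T, ∫⁻ x, ENNReal.ofReal ((x c)^2) ∂D := by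
      rw [← lintegral_finset_sum _ (fun ς _ => ((htmeas ς).pow_const 2).ennreal_ofReal)]
      rw [← lintegral_finset_sum _ (fun c _ => hmeasc c), ← lintegral_const_mul _
        (Finset.measurable_sum T (fun c _ => hmeasc c))]
      congr 1
      funext x
      rw [← ENNReal.ofReal_sum_of_nonneg (fun _ _ => sq_nonneg _),
        ← ENNReal.ofReal_sum_of_nonneg (fun _ _ => sq_nonneg _)]
      have hptw : ∑ ς : Fin d → Bool, (t ς x)^2 = 2^d * ∑ c ∈ T, (x c)^2 := by
        simp only [htdef]
        exact sum_sq_signs T x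
      rw [hptw, ENNReal.ofReal_mul (by positivity)]
      congr 1
      rw [ENNReal.ofReal_pow (by norm_num : (0:ℝ) ≤ 2)]
      norm_num
    have hTsum : ∑ c ∈ T, ∫⁻ x, ENNReal.ofReal ((x c)^2) ∂D
        = ∑ j ∈ Finset.Ici i, ∫⁻ η, ENNReal.ofReal ((η (σ j)) ^ 2) ∂D := by
      rw [hTdef, Finset.sum_map]
      rfl
    have hcard : (Finset.univ : Finset (Fin d → Bool)).card = 2^d := by
      rw [Finset.card_univ, Fintype.card_fun]
      simp
    have hchain : (2:ENNReal)^d * X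
        ≤ (2:ENNReal)^d * ∑ j ∈ Finset.Ici i, ∫⁻ η, ENNReal.ofReal ((η (σ j)) ^ 2) ∂D := by
      calc (2:ENNReal)^d * X = ∑ _ς : Fin d → Bool, X := by
            rw [Finset.sum_const, hcard, nsmul_eq_mul]
            push_cast
            ring
        _ ≤ ∑ ς : Fin d → Bool, ∫⁻ x, ENNReal.ofReal ((t ς x)^2) ∂D :=
            Finset.sum_le_sum (fun ς _ => hcheb ς)
        _ = (2:ENNReal)^d * ∑ j ∈ Finset.Ici i, ∫⁻ η, ENNReal.ofReal ((η (σ j)) ^ 2) ∂D := by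
            rw [hτsum, hTsum]
    exact (ENNReal.mul_le_mul_iff_right (by positivity) (by simp [ENNReal.pow_ne_top]) ).mp hchain
  -- peeling: each term is at most the i-th one
  have hpeel : (∑ j ∈ Finset.Ici i, ∫⁻ η, ENNReal.ofReal ((η (σ j)) ^ 2) ∂D)
      ≤ (k : ENNReal) * ∫⁻ η, ENNReal.ofReal ((η (σ i)) ^ 2) ∂D := by
    calc (∑ j ∈ Finset.Ici i, ∫⁻ η, ENNReal.ofReal ((η (σ j)) ^ 2) ∂D)
        ≤ ∑ _j ∈ Finset.Ici i, ∫⁻ η, ENNReal.ofReal ((η (σ i)) ^ 2) ∂D :=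
          Finset.sum_le_sum fun j hj => hmono i j (Finset.mem_Ici.mp hj)
      _ = (k : ENNReal) * ∫⁻ η, ENNReal.ofReal ((η (σ i)) ^ 2) ∂D := by
          rw [Finset.sum_const, Fin.card_Ici, nsmul_eq_mul]
  -- conclusion
  have hfinal : X ≤ (k : ENNReal) * ∫⁻ η, ENNReal.ofReal ((η (σ i)) ^ 2) ∂D :=
    le_trans hsum hpeel
  set e₀ : ℝ := (∫⁻ η, ENNReal.ofReal ((η (σ i)) ^ 2) ∂D).toReal with he₀
  have he₀0 : 0 ≤ e₀ := ENNReal.toReal_nonneg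
  have hEσ : (∫⁻ η, ENNReal.ofReal ((η (σ i)) ^ 2) ∂D) = ENNReal.ofReal e₀ :=
    (ENNReal.ofReal_toReal htop).symm
  have hXle : X ≤ ENNReal.ofReal (K * e₀) := by
    rw [hEσ] at hfinal
    calc X ≤ (k : ENNReal) * ENNReal.ofReal e₀ := hfinal
      _ = ENNReal.ofReal K * ENNReal.ofReal e₀ := by rw [hKdef, ENNReal.ofReal_natCast]
      _ = ENNReal.ofReal (K * e₀) := (ENNReal.ofReal_mul hKpos.le).symm
  have hreal : (M * cst * K / 2)^2 * ((1 - M*δ)/2) ≤ K * e₀ := by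
    rw [hXdef] at hXle
    exact (ENNReal.ofReal_le_ofReal_iff (by positivity)).mp hXle
  have hcore := core_ineq δ hδ0 hδ1
  rw [← hmdef, ← hMdef] at hcore
  have hKe : (0:ℝ) < K ^ (1 - 2/pt) := Real.rpow_pos_of_pos hKpos _
  have hL : (M * cst * K / 2)^2 * ((1 - M*δ)/2)
      = (ε^2 * K^(1 - 2/pt)) * (M^2 * (1 - M*δ)/8) * K := by
    linear_combination (M^2 * (1 - M*δ)/8 * K) * hcstK
  have hA : (ε^2 * K^(1 - 2/pt)) * (M^2 * (1 - M*δ)/8) ≤ e₀ := by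
    rw [hL] at hreal
    have := (mul_le_mul_iff_left₀ hKpos).mp (by linarith : (ε^2 * K^(1 - 2/pt)) * (M^2 * (1 - M*δ)/8) * K ≤ e₀ * K)
    exact this
  have h0 : ε^2 * K^(1 - 2/pt) * ((1-δ)/(800*δ^2))
      ≤ ε^2 * K^(1 - 2/pt) * (M^2 * (1 - M*δ)/8) :=
    mul_le_mul_of_nonneg_left hcore (by positivity)
  have htarget : ε^2 * K^(1 - 2/pt) / 800 * ((1-δ)/δ^2) ≤ e₀ := by
    calc ε^2 * K^(1 - 2/pt) / 800 * ((1-δ)/δ^2)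
        = ε^2 * K^(1 - 2/pt) * ((1-δ)/(800*δ^2)) := by ring
      _ ≤ ε^2 * K^(1 - 2/pt) * (M^2 * (1 - M*δ)/8) := h0
      _ ≤ e₀ := hA
  rw [hEσ]
  exact ENNReal.ofReal_le_ofReal htarget
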